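/- For the modified hinge loss φ(z) = max{1−z, 0}^{1+Δ} with Δ > 0, the minimizer of z ↦ η·φ(z) + (1−η)·φ(−z) over z ∈ [−1,1] for η ∈ (0,1) is z*(η) = (η^{1/Δ} − (1−η)^{1/Δ})/(η^{1/Δ} + (1−η)^{1/Δ}). -/

import Mathlib

theorem stmt15 (Δ : ℝ) (hΔ : 0 < Δ) (η : ℝ) (hη : η ∈ Set.Ioo (0:ℝ) 1) :
    IsMinOn
      (fun z : ℝ =>
        η * max (1 - z) 0 ^ (1 + Δ) + (1 - η) * max (1 - (-z)) 0 ^ (1 + Δ))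
      (Set.Icc (-1) 1)
      ((η ^ (1 / Δ) - (1 - η) ^ (1 / Δ)) / (η ^ (1 / Δ) + (1 - η) ^ (1 / Δ))) := by
  obtain ⟨hη0, hη1⟩ := hη
  have hη1' : (0:ℝ) < 1 - η := by linarith
  set p := 1 + Δ with hp
  have hp1 : (1:ℝ) ≤ p := by simp only [hp]; linarith
  set a := η ^ (1/Δ) with ha
  set b := (1-η) ^ (1/Δ) with hb
  have hapos : 0 < a := Real.rpow_pos_of_pos hη0 _
  have hbpos : 0 < b := Real.rpow_pos_of_pos hη1' _
  have habpos : 0 < a + b := by linarith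
  have haΔ : a ^ Δ = η := by
    rw [ha, ← Real.rpow_mul hη0.le, one_div, inv_mul_cancel₀ hΔ.ne', Real.rpow_one]
  have hbΔ : b ^ Δ = 1 - η := by
    rw [hb, ← Real.rpow_mul hη1'.le, one_div, inv_mul_cancel₀ hΔ.ne', Real.rpow_one]
  -- tangent line inequality for convexity of rpow
  have tangent : ∀ s t : ℝ, 0 < s → 0 ≤ t → s ^ p + p * s ^ Δ * (t - s) ≤ t ^ p := by
    intro s t hs ht
    have h1 : (-1:ℝ) ≤ t/s - 1 := by
      have := div_nonneg ht hs.le; linarith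
    have h2 := one_add_mul_self_le_rpow_one_add h1 hp1
    have h3 : (1 + (t/s - 1)) = t / s := by ring
    rw [h3, Real.div_rpow ht hs.le] at h2
    have hsp : 0 < s ^ p := Real.rpow_pos_of_pos hs _
    have h5 : (1 + p*(t/s-1)) * s ^ p ≤ t ^ p := by
      rw [← le_div_iff₀ hsp]; exact h2
    have hsplit : s ^ p = s ^ Δ * s := by
      rw [hp, add_comm, Real.rpow_add hs, Real.rpow_one]
    calc s ^ p + p * s ^ Δ * (t - s) = (1 + p*(t/s-1)) * s ^ p := by
          rw [hsplit]; field_simp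
      _ ≤ t ^ p := h5
  rw [isMinOn_iff]
  intro z hz
  obtain ⟨hz1, hz2⟩ := hz
  have hu : (0:ℝ) ≤ 1 - z := by linarith
  have hv : (0:ℝ) ≤ 1 + z := by linarith
  set z₀ := (a - b) / (a + b) with hz₀
  have hu₀ : 1 - z₀ = 2*b/(a+b) := by rw [hz₀]; field_simp; ring
  have hv₀ : 1 + z₀ = 2*a/(a+b) := by rw [hz₀]; field_simp; ring
  have hu₀pos : 0 < 2*b/(a+b) := by positivity
  have hv₀pos : 0 < 2*a/(a+b) := by positivity
  rw [show (1 - -z) = 1 + z by ring, show (1 - -z₀) = 1 + z₀ by ring,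
    max_eq_left hu, max_eq_left hv, hu₀, hv₀,
    max_eq_left hu₀pos.le, max_eq_left hv₀pos.le]
  -- equality of the two tangent slopes
  have hc : η * (2*b/(a+b)) ^ Δ = (1-η) * (2*a/(a+b)) ^ Δ := by
    rw [← hbΔ, ← haΔ, ← Real.mul_rpow hapos.le hu₀pos.le,
      ← Real.mul_rpow hbpos.le hv₀pos.le]
    congr 1
    field_simp
  have hT1 : η*(2*b/(a+b))^p + p*(η*(2*b/(a+b))^Δ)*(1-z-(2*b/(a+b)))
      ≤ η*(1-z)^p := by
    calc η*(2*b/(a+b))^p + p*(η*(2*b/(a+b))^Δ)*(1-z-(2*b/(a+b)))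
        = η * ((2*b/(a+b))^p + p*(2*b/(a+b))^Δ*((1-z)-(2*b/(a+b)))) := by ring
      _ ≤ η*(1-z)^p := mul_le_mul_of_nonneg_left (tangent _ _ hu₀pos hu) hη0.le
  have hT2 : (1-η)*(2*a/(a+b))^p + p*(η*(2*b/(a+b))^Δ)*(1+z-(2*a/(a+b)))
      ≤ (1-η)*(1+z)^p := by
    calc (1-η)*(2*a/(a+b))^p + p*(η*(2*b/(a+b))^Δ)*(1+z-(2*a/(a+b)))
        = (1-η) * ((2*a/(a+b))^p + p*(2*a/(a+b))^Δ*((1+z)-(2*a/(a+b)))) := by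
          rw [hc]; ring
      _ ≤ (1-η)*(1+z)^p := mul_le_mul_of_nonneg_left (tangent _ _ hv₀pos hv) hη1'.le
  have hsum : (1-z-(2*b/(a+b))) + (1+z-(2*a/(a+b))) = 0 := by
    field_simp; ring
  have hzero : p*(η*(2*b/(a+b))^Δ)*(1-z-(2*b/(a+b)))
      + p*(η*(2*b/(a+b))^Δ)*(1+z-(2*a/(a+b))) = 0 := by
    calc p*(η*(2*b/(a+b))^Δ)*(1-z-(2*b/(a+b)))
          + p*(η*(2*b/(a+b))^Δ)*(1+z-(2*a/(a+b)))
        = p*(η*(2*b/(a+b))^Δ)*((1-z-(2*b/(a+b))) + (1+z-(2*a/(a+b)))) := by ring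
      _ = 0 := by rw [hsum, mul_zero]
  linarith [hT1, hT2]
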